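/- Let c(n) denote the number of functions f : ZMod n → {Empty, Blue, Red} such that no two cyclically adjacent vertices receive the same non-Empty color. Then c(3) = 13, c(4) = 35, c(5) = 81, and c(n) = c(n-1) + 3·c(n-2) + c(n-3) for all n ≥ 6. -/

import Mathlib

inductive Color : Type
  | Empty | Blue | Red
  deriving DecidableEq

instance instFintypeColor : Fintype Color :=
  ⟨{Color.Empty, Color.Blue, Color.Red}, fun x => by cases x <;> simp⟩

/-- Number of Col positions on the cycle `C_n`: colorings of `ZMod n` where no
two cyclically adjacent vertices receive the same non-`Empty` color. -/
noncomputable def colCycle (n : ℕ) : ℕ :=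
  Nat.card {c : ZMod n → Color //
    ∀ i : ZMod n, ¬(c i ≠ Color.Empty ∧ c i = c (i + 1))}

namespace ColAux

def compat (a b : Color) : Prop := ¬(a ≠ Color.Empty ∧ a = b)

instance (a b : Color) : Decidable (compat a b) := by unfold compat; infer_instance

def chainOK : (n : ℕ) → Color → (Fin n → Color) → Color → Prop
  | 0, a, _, b => a = b
  | n+1, a, f, b => compat a (f 0) ∧ chainOK n (f 0) (Fin.tail f) b

instance chainOKdec : ∀ n a (f : Fin n → Color) b, Decidable (chainOK n a f b)
  | 0, a, _, b => inferInstanceAs (Decidable (a = b))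
  | n+1, a, f, b => @instDecidableAnd _ _ _ (chainOKdec n (f 0) (Fin.tail f) b)

def pc : ℕ → Color → Color → ℕ
  | 0, a, b => if a = b then 1 else 0
  | n+1, a, b => ∑ x : Color, if compat a x then pc n x b else 0

lemma pc_succ (n a b) : pc (n+1) a b = ∑ x : Color, if compat a x then pc n x b else 0 := rfl

lemma card_chain : ∀ (n : ℕ) (a b : Color),
    Fintype.card {f : Fin n → Color // chainOK n a f b} = pc n a b := by
  intro n
  induction n with
  | zero =>
    intro a b
    show Fintype.card {_f : Fin 0 → Color // a = b} = if a = b then 1 else 0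
    by_cases h : a = b
    · simp [h]
    · simp [h]
  | succ n ih =>
    intro a b
    rw [pc_succ]
    have e : {f : Fin (n+1) → Color // chainOK (n+1) a f b} ≃
        {p : Color × (Fin n → Color) // compat a p.1 ∧ chainOK n p.1 p.2 b} :=
      (Fin.consEquiv (fun _ : Fin (n+1) => Color)).symm.subtypeEquiv (fun f => Iff.rfl)
    rw [Fintype.card_congr e, Fintype.card_subtype, Finset.card_filter]
    rw [Fintype.sum_prod_type]
    refine Finset.sum_congr rfl (fun x _ => ?_)
    by_cases h : compat a x
    · simp only [h, if_true, true_and]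
      rw [← ih x b, Fintype.card_subtype, Finset.card_filter]
    · simp [h]

lemma pc_rec3 : ∀ (n : ℕ) (a b : Color),
    pc (n+3) a b = pc (n+2) a b + 3 * pc (n+1) a b + pc n a b := by
  intro n
  induction n with
  | zero => decide
  | succ n ih =>
    intro a b
    rw [show n+1+3 = (n+3)+1 from rfl, pc_succ, show n+1+2 = (n+2)+1 from rfl, pc_succ,
      show n+1+1 = (n+1)+1 from rfl, pc_succ, pc_succ]
    simp only [Finset.mul_sum, ← Finset.sum_add_distrib]
    refine Finset.sum_congr rfl (fun x _ => ?_)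
    by_cases h : compat a x
    · simp only [h, if_true, ih x b]
    · simp [h]

def trc (n : ℕ) : ℕ := ∑ a : Color, pc n a a

lemma trc_rec3 (n : ℕ) : trc (n+3) = trc (n+2) + 3 * trc (n+1) + trc n := by
  unfold trc
  simp only [Finset.mul_sum, ← Finset.sum_add_distrib]
  exact Finset.sum_congr rfl (fun a _ => pc_rec3 n a a)

lemma chainOK_iff : ∀ (n : ℕ) (a b : Color) (f : Fin n → Color),
    chainOK n a f b ↔
      (∀ i : Fin n, compat ((Fin.cons a f : Fin (n+1) → Color) i.castSucc) (f i)) ∧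
        (Fin.cons a f : Fin (n+1) → Color) (Fin.last n) = b := by
  intro n
  induction n with
  | zero =>
    intro a b f
    show (a = b) ↔ _
    simp [Fin.last]
  | succ n ih =>
    intro a b f
    show (compat a (f 0) ∧ chainOK n (f 0) (Fin.tail f) b) ↔ _
    rw [ih (f 0) b (Fin.tail f)]
    rw [Fin.cons_self_tail]
    constructor
    · rintro ⟨h0, hstep, hlast⟩
      refine ⟨?_, ?_⟩
      · intro i
        induction i using Fin.cases with
        | zero => simpa using h0
        | succ j =>
          have hc : (Fin.cons a f : Fin (n+2) → Color) (j.succ.castSucc) = f j.castSucc := by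
            rw [← Fin.succ_castSucc, Fin.cons_succ]
          rw [hc]
          simpa [Fin.tail] using hstep j
      · rw [show Fin.last (n+1) = (Fin.last n).succ from rfl, Fin.cons_succ]
        exact hlast
    · rintro ⟨hall, hlast⟩
      refine ⟨?_, ?_, ?_⟩
      · simpa using hall 0
      · intro j
        have h2 := hall j.succ
        rw [← Fin.succ_castSucc, Fin.cons_succ] at h2
        simpa [Fin.tail] using h2
      · rw [show Fin.last (n+1) = (Fin.last n).succ from rfl, Fin.cons_succ] at hlast
        exact hlast

lemma cyclic_iff (m : ℕ) (a : Color) (c : Fin (m+1) → Color) :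
    ((∀ i : ZMod (m+1), ¬(c i ≠ Color.Empty ∧ c i = c (i + 1 : ZMod (m+1)))) ∧
        c (Fin.last m) = a) ↔
      chainOK (m+1) a c a := by
  rw [chainOK_iff]
  have hcons_last : (Fin.cons a c : Fin (m+2) → Color) (Fin.last (m+1)) = c (Fin.last m) := by
    rw [show Fin.last (m+1) = (Fin.last m).succ from rfl, Fin.cons_succ]
  constructor
  · rintro ⟨h, hlast⟩
    have h' : ∀ i : Fin (m+1), compat (c i) (c (i + 1)) := fun i => h i
    refine ⟨?_, by rw [hcons_last, hlast]⟩
    intro i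
    induction i using Fin.cases with
    | zero =>
      have h2 := h' (Fin.last m)
      rw [Fin.last_add_one] at h2
      simpa [Fin.cons_zero, hlast] using h2
    | succ j =>
      have h2 := h' j.castSucc
      rw [Fin.coeSucc_eq_succ] at h2
      rw [← Fin.succ_castSucc, Fin.cons_succ]
      exact h2
  · rintro ⟨hall, hlast⟩
    rw [hcons_last] at hlast
    refine ⟨?_, hlast⟩
    have h' : ∀ i : Fin (m+1), compat (c i) (c (i + 1)) := by
      intro i
      rcases eq_or_ne i (Fin.last m) with h | h
      · have h2 := hall 0
        rw [Fin.castSucc_zero, Fin.cons_zero] at h2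
        have heq : i + 1 = (0 : Fin (m+1)) := by rw [h, Fin.last_add_one]
        rw [heq, h, hlast]
        exact h2
      · have hlt : i.val < m := by
          rcases Nat.lt_succ_iff_lt_or_eq.mp i.isLt with h2 | h2
          · exact h2
          · exact absurd (Fin.ext h2) h
        set j : Fin m := ⟨i.val, hlt⟩ with hj
        have hcast : j.castSucc = i := rfl
        have h2 := hall j.succ
        rw [← Fin.succ_castSucc, Fin.cons_succ, hcast] at h2
        rw [← Fin.coeSucc_eq_succ, hcast] at h2
        exact h2
    exact fun i => h' i

lemma colCycle_succ (m : ℕ) : colCycle (m+1) = trc (m+1) := by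
  unfold colCycle
  rw [Nat.card_eq_fintype_card]
  have key : Fintype.card {c : ZMod (m+1) → Color //
      ∀ i : ZMod (m+1), ¬(c i ≠ Color.Empty ∧ c i = c (i + 1))} =
      ∑ a : Color, Fintype.card {c : Fin (m+1) → Color // chainOK (m+1) a c a} := by
    rw [Fintype.card_subtype, Finset.card_filter]
    haveI hdec : ∀ c : Fin (m+1) → Color,
        Decidable (∀ i : ZMod (m+1), ¬(c i ≠ Color.Empty ∧ c i = c (i + 1 : ZMod (m+1)))) :=
      fun c => Classical.dec _
    have hsplit : ∀ c : Fin (m+1) → Color,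
        (if (∀ i : ZMod (m+1), ¬(c i ≠ Color.Empty ∧ c i = c (i + 1 : ZMod (m+1)))) then (1:ℕ) else 0) =
          ∑ a : Color, if chainOK (m+1) a c a then 1 else 0 := by
      intro c
      by_cases hP : ∀ i : ZMod (m+1), ¬(c i ≠ Color.Empty ∧ c i = c (i + 1 : ZMod (m+1)))
      · rw [if_pos hP]
        have : ∀ a : Color, (if chainOK (m+1) a c a then (1:ℕ) else 0) =
            if c (Fin.last m) = a then 1 else 0 := by
          intro a
          congr 1
          rw [← cyclic_iff m a c]
          simp [hP]
        simp only [this]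
        rw [Finset.sum_ite_eq (Finset.univ) (c (Fin.last m)) (fun _ => (1:ℕ))]
        simp
      · rw [if_neg hP]
        symm
        apply Finset.sum_eq_zero
        intro a _
        rw [if_neg]
        intro hc
        exact hP (((cyclic_iff m a c).mpr hc).1)
    calc (∑ c : ZMod (m+1) → Color, if (∀ i : ZMod (m+1),
            ¬(c i ≠ Color.Empty ∧ c i = c (i + 1))) then (1:ℕ) else 0)
        = ∑ c : Fin (m+1) → Color, ∑ a : Color,
            if chainOK (m+1) a c a then 1 else 0 := by
          exact Finset.sum_congr rfl (fun c _ => by convert hsplit c)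
      _ = ∑ a : Color, ∑ c : Fin (m+1) → Color,
            if chainOK (m+1) a c a then 1 else 0 := Finset.sum_comm
      _ = ∑ a : Color, Fintype.card {c : Fin (m+1) → Color // chainOK (m+1) a c a} := by
          refine Finset.sum_congr rfl (fun a _ => ?_)
          rw [Fintype.card_subtype, Finset.card_filter]
  rw [key]
  unfold trc
  exact Finset.sum_congr rfl (fun a _ => card_chain (m+1) a a)

end ColAux

theorem colCycle_recursion :
    colCycle 3 = 13 ∧ colCycle 4 = 35 ∧ colCycle 5 = 81 ∧
    ∀ n : ℕ, 6 ≤ n →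
      colCycle n = colCycle (n - 1) + 3 * colCycle (n - 2) + colCycle (n - 3) := by
  refine ⟨?_, ?_, ?_, ?_⟩
  · rw [show (3:ℕ) = 2 + 1 from rfl, ColAux.colCycle_succ]; decide
  · rw [show (4:ℕ) = 3 + 1 from rfl, ColAux.colCycle_succ]; decide
  · rw [show (5:ℕ) = 4 + 1 from rfl, ColAux.colCycle_succ]; decide
  · intro n hn
    obtain ⟨k, rfl⟩ : ∃ k, n = k + 6 := ⟨n - 6, by omega⟩
    have h1 : k + 6 - 1 = (k + 4) + 1 := by omega
    have h2 : k + 6 - 2 = (k + 3) + 1 := by omega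
    have h3 : k + 6 - 3 = (k + 2) + 1 := by omega
    rw [h1, h2, h3, show k + 6 = (k + 5) + 1 from rfl,
      ColAux.colCycle_succ, ColAux.colCycle_succ, ColAux.colCycle_succ, ColAux.colCycle_succ]
    have := ColAux.trc_rec3 (k + 3)
    rw [show k + 3 + 3 = (k+5)+1 from rfl, show k + 3 + 2 = (k+4)+1 from rfl,
      show k + 3 + 1 = (k+3)+1 from rfl] at this
    exact this
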